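/- Every graph G of order at least two with at least m(|V(G)|-1)+1 edges contains a subgraph H on at least two vertices such that H - e is m-tree-connected for every edge e of H (i.e., H is m⁺-tree-connected). -/

import Mathlib

open SimpleGraph

def IsTreeConn {V : Type*} (m : ℕ) (G : SimpleGraph V) : Prop :=
  ∃ T : Fin m → SimpleGraph V, (∀ i, T i ≤ G) ∧ (∀ i, (T i).IsTree) ∧
    ∀ i j, i ≠ j → Disjoint (T i).edgeSet (T j).edgeSet

noncomputable def eIn {V : Type*} (G : SimpleGraph V) (S : Set V) : ℕ :=
  {e ∈ G.edgeSet | ∀ v ∈ e, v ∈ S}.ncard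

def IsSparse {V : Type*} (m : ℕ) (G : SimpleGraph V) : Prop :=
  ∀ S : Set V, S.Nonempty → (eIn G S : ℤ) ≤ m * S.ncard - m

def mComp {V : Type*} (m : ℕ) (G : SimpleGraph V) (v : V) : Set V :=
  ⋃₀ {X : Set V | v ∈ X ∧ IsTreeConn m (G.induce X)}

noncomputable def crossE {V : Type*} (m : ℕ) (G : SimpleGraph V) : ℕ :=
  {e ∈ G.edgeSet | ∃ u ∈ e, ∃ w ∈ e, mComp m G u ≠ mComp m G w}.ncard

noncomputable def Omega {V : Type*} (m : ℕ) (G : SimpleGraph V) : ℤ :=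
  m * (Set.range (mComp m G)).ncard - crossE m G

section Aux
variable {W : Type*}

lemma acyclic_mono {G G' : SimpleGraph W} (h : G ≤ G') (hG' : G'.IsAcyclic) : G.IsAcyclic := by
  intro v c hc
  exact hG' (c.mapLe h) ((Walk.mapLe_isCycle h).mpr hc)

lemma edge_not_diag {G : SimpleGraph W} {A : Set (Sym2 W)} (hA : A ⊆ G.edgeSet) {e : Sym2 W}
    (he : e ∈ A) : ¬ e.IsDiag :=
  G.not_isDiag_of_mem_edgeSet (hA he)

lemma edgeSet_from {A : Set (Sym2 W)} (hA : ∀ e ∈ A, ¬ e.IsDiag) :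
    (fromEdgeSet A).edgeSet = A := by
  rw [edgeSet_fromEdgeSet]
  ext e
  simp only [Set.mem_diff, Set.mem_setOf_eq, and_iff_left_iff_imp]
  exact fun he => hA e he

lemma acyclic_insert {A : Set (Sym2 W)} (hA : (fromEdgeSet A).IsAcyclic) {x y : W}
    (hne : ¬ (fromEdgeSet A).Reachable x y) :
    (fromEdgeSet (insert s(x,y) A)).IsAcyclic := by
  have hxy : x ≠ y := by rintro rfl; exact hne (Reachable.refl _)
  intro v c hc
  by_cases he : s(x,y) ∈ c.edges
  · have := (adj_and_reachable_delete_edges_iff_exists_cycle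
      (G := fromEdgeSet (insert s(x,y) A))).mpr ⟨v, c, hc, he⟩
    refine hne (this.2.mono ?_)
    intro a b hab
    simp only [sdiff_adj, fromEdgeSet_adj, Set.mem_insert_iff, Set.mem_singleton_iff] at hab ⊢
    obtain ⟨⟨h1, h2⟩, h3⟩ := hab
    rcases h1 with h1 | h1
    · exact absurd ⟨h1, h2⟩ h3
    · exact ⟨h1, h2⟩
  · refine hA (c.transfer (fromEdgeSet A) ?_) (hc.transfer _)
    intro f hf
    have hf' := c.edges_subset_edgeSet hf
    rw [edgeSet_fromEdgeSet] at hf' ⊢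
    rcases hf' with ⟨h1, h2⟩
    rcases h1 with h1 | h1
    · exact absurd (h1 ▸ hf) he
    · exact ⟨h1, h2⟩

-- removing an edge of the (unique) path between x and y disconnects x from y
lemma not_reachable_sdiff {A : Set (Sym2 W)} (hA : (fromEdgeSet A).IsAcyclic) {x y : W}
    (p : (fromEdgeSet A).Walk x y) (hp : p.IsPath) {f : Sym2 W} (hf : f ∈ p.edges) :
    ¬ (fromEdgeSet (A \ {f})).Reachable x y := by
  classical
  rintro ⟨q⟩
  set q' : (fromEdgeSet (A \ {f})).Walk x y := q.toPath.1
  have hq : q'.IsPath := (q.toPath).2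
  have hsub : ∀ e ∈ q'.edges, e ∈ (fromEdgeSet A).edgeSet := by
    intro e he
    have := q'.edges_subset_edgeSet he
    rw [edgeSet_fromEdgeSet] at this ⊢
    exact ⟨this.1.1, this.2⟩
  have hq'' : (q'.transfer (fromEdgeSet A) hsub).IsPath := hq.transfer _
  have heq := hA.path_unique ⟨p, hp⟩ ⟨q'.transfer _ hsub, hq''⟩
  have hpq : p = q'.transfer (fromEdgeSet A) hsub := congrArg Subtype.val heq
  have hfq : f ∈ (q'.transfer (fromEdgeSet A) hsub).edges := hpq ▸ hf
  rw [Walk.edges_transfer] at hfq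
  have := q'.edges_subset_edgeSet hfq
  rw [edgeSet_fromEdgeSet] at this
  exact this.1.2 rfl

lemma tree_ncard_edges [Fintype W] {G : SimpleGraph W} (h : G.IsTree) :
    G.edgeSet.ncard + 1 = Fintype.card W := by
  classical
  rw [← h.card_edgeFinset]
  congr 1
  simp [Set.ncard_eq_toFinset_card', edgeFinset]

lemma acyclic_ncard_le [Fintype W] [Nonempty W] {A : Set (Sym2 W)} (hd : ∀ e ∈ A, ¬ e.IsDiag)
    (hA : (fromEdgeSet A).IsAcyclic) : A.ncard + 1 ≤ Fintype.card W := by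
  classical
  set C : Set (Set (Sym2 W)) := {B | A ⊆ B ∧ (∀ e ∈ B, ¬ e.IsDiag) ∧ (fromEdgeSet B).IsAcyclic}
  have hfin : C.Finite := Set.toFinite _
  obtain ⟨B, hBC, hBmax⟩ := Set.Finite.exists_maximalFor Set.ncard C hfin ⟨A, subset_rfl, hd, hA⟩
  obtain ⟨hAB, hBd, hBa⟩ := hBC
  have hconn : (fromEdgeSet B).Connected := by
    rw [connected_iff]
    refine ⟨fun x y => ?_, inferInstance⟩
    by_contra hne
    have hxy : x ≠ y := by rintro rfl; exact hne (Reachable.refl _)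
    have hnotmem : s(x,y) ∉ B := by
      intro hmem
      exact hne (Adj.reachable (by rw [fromEdgeSet_adj]; exact ⟨hmem, hxy⟩))
    have hmem : insert s(x,y) B ∈ C := by
      refine ⟨hAB.trans (Set.subset_insert _ _), ?_, acyclic_insert hBa hne⟩
      intro e he
      rcases he with he | he
      · subst he; simpa using hxy
      · exact hBd e he
    have hcard : (insert s(x,y) B).ncard = B.ncard + 1 :=
      Set.ncard_insert_of_notMem hnotmem (Set.toFinite _)
    have := hBmax hmem (by omega)
    omega
  have htree : (fromEdgeSet B).IsTree := ⟨hconn, hBa⟩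
  have := tree_ncard_edges htree
  rw [edgeSet_from hBd] at this
  have hle : A.ncard ≤ B.ncard := Set.ncard_le_ncard hAB (Set.toFinite _)
  omega

def pullE (U : Set W) (A : Set (Sym2 W)) : Set (Sym2 ↥U) := {e | e.map (Subtype.val) ∈ A}

lemma mem_pullE {U : Set W} {A : Set (Sym2 W)} {x y : ↥U} :
    s(x,y) ∈ pullE U A ↔ s(x.1, y.1) ∈ A := by
  simp [pullE]

lemma ncard_pullE {U : Set W} {A : Set (Sym2 W)} (hin : ∀ e ∈ A, ∀ v ∈ e, v ∈ U) :
    (pullE U A).ncard = A.ncard := by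
  have himg : Sym2.map (Subtype.val : ↥U → W) '' (pullE U A) = A := by
    ext e
    constructor
    · rintro ⟨e', he', rfl⟩; exact he'
    · intro he
      induction e with
      | _ x y =>
        have hx : x ∈ U := hin _ he x (by simp)
        have hy : y ∈ U := hin _ he y (by simp)
        exact ⟨s(⟨x, hx⟩, ⟨y, hy⟩), by simpa [pullE] using he, by simp⟩
  conv_rhs => rw [← himg]
  rw [Set.ncard_image_of_injective _ (Sym2.map.injective Subtype.val_injective)]

lemma pullE_nondiag {U : Set W} {A : Set (Sym2 W)} (hd : ∀ e ∈ A, ¬ e.IsDiag) :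
    ∀ e ∈ pullE U A, ¬ e.IsDiag := by
  intro e he hdiag
  induction e with
  | _ x y =>
    have : x = y := by simpa [Sym2.isDiag_iff_proj_eq] using hdiag
    subst this
    exact hd _ he (by simp [Sym2.isDiag_iff_proj_eq])

lemma acyclic_pullE {U : Set W} {A : Set (Sym2 W)} (hA : (fromEdgeSet A).IsAcyclic) :
    (fromEdgeSet (pullE U A)).IsAcyclic := by
  let φ : fromEdgeSet (pullE U A) →g fromEdgeSet A :=
    { toFun := Subtype.val
      map_rel' := by
        intro a b hab
        rw [fromEdgeSet_adj] at hab ⊢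
        exact ⟨by simpa [pullE] using hab.1, fun h => hab.2 (Subtype.val_injective h)⟩ }
  have hinj : Function.Injective ⇑φ := fun a b h => Subtype.val_injective h
  intro v c hc
  exact hA (c.map φ) (hc.map hinj)

lemma reachable_lift {U : Set W} {A : Set (Sym2 W)} (hin : ∀ e ∈ A, ∀ v ∈ e, v ∈ U) :
    ∀ {x y : W} (_ : (fromEdgeSet A).Walk x y) (hx : x ∈ U) (hy : y ∈ U),
    (fromEdgeSet (pullE U A)).Reachable ⟨x,hx⟩ ⟨y,hy⟩ := by
  intro x y p
  induction p with
  | nil =>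
    intro hx hy
    exact Reachable.refl _
  | @cons x z y h p ih =>
    intro hx hy
    rw [fromEdgeSet_adj] at h
    have hz : z ∈ U := hin _ h.1 z (by simp)
    refine Reachable.trans ?_ (ih hz hy)
    refine Adj.reachable ?_
    rw [fromEdgeSet_adj, mem_pullE]
    exact ⟨h.1, fun hc => h.2 (congrArg Subtype.val hc)⟩

lemma connected_count [Fintype W] {U : Set W} (hU : U.Nonempty) {A : Set (Sym2 W)}
    (hd : ∀ e ∈ A, ¬ e.IsDiag) (hin : ∀ e ∈ A, ∀ v ∈ e, v ∈ U)
    (hA : (fromEdgeSet A).IsAcyclic)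
    (hconn : ∀ x ∈ U, ∀ y ∈ U, (fromEdgeSet A).Reachable x y) :
    A.ncard + 1 = U.ncard := by
  classical
  have : Fintype ↥U := (Set.toFinite U).fintype
  have : Nonempty ↥U := Set.Nonempty.to_subtype hU
  have htree : (fromEdgeSet (pullE U A)).IsTree := by
    refine ⟨?_, acyclic_pullE hA⟩
    rw [connected_iff]
    refine ⟨fun a b => ?_, inferInstance⟩
    obtain ⟨w⟩ := hconn a.1 a.2 b.1 b.2
    have := reachable_lift hin w a.2 b.2
    exact this
  have := tree_ncard_edges htree
  rw [edgeSet_from (pullE_nondiag hd), ncard_pullE hin] at this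
  rw [this]
  rw [Set.ncard_eq_toFinset_card', Set.toFinset_card]

lemma sym2_rep (e : Sym2 W) : ∃ x y, e = s(x,y) := by
  induction e with
  | _ x y => exact ⟨x, y, rfl⟩

structure GoodFam (m : ℕ) (E : Set (Sym2 W)) (F : Fin m → Set (Sym2 W)) : Prop where
  sub : ∀ i, F i ⊆ E
  acyc : ∀ i, (fromEdgeSet (F i)).IsAcyclic
  disj : ∀ i j, i ≠ j → ∀ e, e ∈ F i → e ∈ F j → False

def uF {m : ℕ} (F : Fin m → Set (Sym2 W)) : Set (Sym2 W) := ⋃ i, F i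

lemma mem_uF {m : ℕ} {F : Fin m → Set (Sym2 W)} {e : Sym2 W} :
    e ∈ uF F ↔ ∃ i, e ∈ F i := Set.mem_iUnion

def Stp {m : ℕ} (F : Fin m → Set (Sym2 W)) (e f : Sym2 W) : Prop :=
  ∃ (i : Fin m) (x y : W), e = s(x,y) ∧
    ∃ p : (fromEdgeSet (F i)).Walk x y, p.IsPath ∧ f ∈ p.edges

def StepN {m : ℕ} (F : Fin m → Set (Sym2 W)) (e0 : Sym2 W) : ℕ → Sym2 W → Prop
  | 0, e => e = e0
  | (k+1), e => ∃ e', StepN F e0 k e' ∧ Stp F e' e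

def Freee {m : ℕ} (F : Fin m → Set (Sym2 W)) (e : Sym2 W) : Prop :=
  ∃ (i : Fin m) (x y : W), e = s(x,y) ∧ ¬ (fromEdgeSet (F i)).Reachable x y

lemma stp_mem {m : ℕ} {F : Fin m → Set (Sym2 W)} {e f : Sym2 W} (h : Stp F e f) :
    ∃ i, f ∈ F i ∧ ¬ f.IsDiag := by
  obtain ⟨i, x, y, _, p, _, hf⟩ := h
  have := p.edges_subset_edgeSet hf
  rw [edgeSet_fromEdgeSet] at this
  exact ⟨i, this.1, this.2⟩

-- the swapped family
def swapF {m : ℕ} (F : Fin m → Set (Sym2 W)) (i j : Fin m) (e : Sym2 W) :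
    Fin m → Set (Sym2 W) :=
  Function.update (Function.update F j (F j \ {e})) i (insert e (F i))

lemma swapF_i {m : ℕ} {F : Fin m → Set (Sym2 W)} {i j : Fin m} (hij : i ≠ j) {e : Sym2 W} :
    swapF F i j e i = insert e (F i) := by
  simp [swapF]

lemma swapF_j {m : ℕ} {F : Fin m → Set (Sym2 W)} {i j : Fin m} (hij : i ≠ j) {e : Sym2 W} :
    swapF F i j e j = F j \ {e} := by
  simp [swapF, Function.update_of_ne hij.symm]

lemma swapF_other {m : ℕ} {F : Fin m → Set (Sym2 W)} {i j l : Fin m} (hli : l ≠ i)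
    (hlj : l ≠ j) {e : Sym2 W} : swapF F i j e l = F l := by
  simp [swapF, Function.update_of_ne hli, Function.update_of_ne hlj]

lemma swap_good {m : ℕ} {E : Set (Sym2 W)} {F : Fin m → Set (Sym2 W)} (hG : GoodFam m E F)
    {i j : Fin m} (hij : i ≠ j) {e : Sym2 W} {x y : W} (he : e ∈ F j) (hexy : e = s(x,y))
    (hfree : ¬ (fromEdgeSet (F i)).Reachable x y) :
    GoodFam m E (swapF F i j e) ∧ uF (swapF F i j e) = uF F := by
  have henotFi : e ∉ F i := by
    intro hmem
    refine hfree (Adj.reachable ?_)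
    rw [fromEdgeSet_adj]
    refine ⟨hexy ▸ hmem, ?_⟩
    rintro rfl
    exact hfree (Reachable.refl _)
  constructor
  · constructor
    · intro l f hf
      rcases eq_or_ne l i with rfl | hli
      · rw [swapF_i hij] at hf
        rcases hf with rfl | hf
        · exact hG.sub j he
        · exact hG.sub l hf
      rcases eq_or_ne l j with rfl | hlj
      · rw [swapF_j hij] at hf
        exact hG.sub l hf.1
      · rw [swapF_other hli hlj] at hf
        exact hG.sub l hf
    · intro l
      rcases eq_or_ne l i with rfl | hli
      · rw [swapF_i hij, hexy]
        exact acyclic_insert (hG.acyc l) hfree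
      rcases eq_or_ne l j with rfl | hlj
      · rw [swapF_j hij]
        exact acyclic_mono (fromEdgeSet_mono Set.diff_subset) (hG.acyc l)
      · rw [swapF_other hli hlj]
        exact hG.acyc l
  -- disjointness
    · intro l l' hll' f hf hf'
      have hmem : ∀ l'' f', l'' ≠ i → f' ∈ swapF F i j e l'' → f' ∈ F l'' ∧ f' ≠ e ∨
          (f' ∈ F l'' ∧ l'' ≠ j) := by
        intro l'' f' hl'' hmemf
        rcases eq_or_ne l'' j with rfl | hlj
        · rw [swapF_j hij] at hmemf
          exact Or.inl ⟨hmemf.1, hmemf.2⟩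
        · rw [swapF_other hl'' hlj] at hmemf
          exact Or.inr ⟨hmemf, hlj⟩
      rcases eq_or_ne l i with rfl | hli
      · rw [swapF_i hij] at hf
        have h2 := hmem l' f (fun h => hll' h.symm) hf'
        rcases hf with rfl | hf
        · rcases h2 with ⟨_, hne⟩ | ⟨hmem', hlj⟩
          · exact hne rfl
          · exact hG.disj j l' (fun h => hlj h.symm) f he hmem'
        · rcases h2 with ⟨hmem', _⟩ | ⟨hmem', _⟩
          · exact hG.disj l l' hll' f hf hmem'
          · exact hG.disj l l' hll' f hf hmem'
      rcases eq_or_ne l' i with rfl | hli'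
      · rw [swapF_i hij] at hf'
        have h2 := hmem l f hli hf
        rcases hf' with rfl | hf'
        · rcases h2 with ⟨_, hne⟩ | ⟨hmem', hlj⟩
          · exact hne rfl
          · exact hG.disj l j hlj f hmem' he
        · rcases h2 with ⟨hmem', _⟩ | ⟨hmem', _⟩
          · exact hG.disj l l' hll' f hmem' hf'
          · exact hG.disj l l' hll' f hmem' hf'
      · have h1 := hmem l f hli hf
        have h2 := hmem l' f hli' hf'
        have hmf : f ∈ F l := by rcases h1 with ⟨h, _⟩ | ⟨h, _⟩ <;> exact h
        have hmf' : f ∈ F l' := by rcases h2 with ⟨h, _⟩ | ⟨h, _⟩ <;> exact h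
        exact hG.disj l l' hll' f hmf hmf'
  · ext f
    simp only [mem_uF]
    constructor
    · rintro ⟨l, hl⟩
      rcases eq_or_ne l i with rfl | hli
      · rw [swapF_i hij] at hl
        rcases hl with rfl | hl
        · exact ⟨j, he⟩
        · exact ⟨l, hl⟩
      rcases eq_or_ne l j with rfl | hlj
      · rw [swapF_j hij] at hl
        exact ⟨l, hl.1⟩
      · rw [swapF_other hli hlj] at hl
        exact ⟨l, hl⟩
    · rintro ⟨l, hl⟩
      rcases eq_or_ne l i with rfl | hli
      · exact ⟨l, by rw [swapF_i hij]; exact Set.mem_insert_iff.mpr (Or.inr hl)⟩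
      rcases eq_or_ne l j with rfl | hlj
      · rcases eq_or_ne f e with rfl | hfe
        · exact ⟨i, by rw [swapF_i hij]; exact Set.mem_insert _ _⟩
        · exact ⟨l, by rw [swapF_j hij]; exact ⟨hl, hfe⟩⟩
      · exact ⟨l, by rw [swapF_other hli hlj]; exact hl⟩

lemma step_transfer {m : ℕ} {F : Fin m → Set (Sym2 W)} {i j : Fin m} (hij : i ≠ j)
    {e : Sym2 W} {e0 : Sym2 W} :
    ∀ k e', StepN F e0 k e' →
      (∃ s a, s < k ∧ StepN F e0 s a ∧ Stp F a e) ∨ StepN (swapF F i j e) e0 k e' := by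
  intro k
  induction k with
  | zero => intro e' h; exact Or.inr h
  | succ k ih =>
    rintro b ⟨a, hSN, hstp⟩
    rcases ih a hSN with ⟨s, c, hs, h1, h2⟩ | hSN₂
    · exact Or.inl ⟨s, c, Nat.lt_succ_of_lt hs, h1, h2⟩
    obtain ⟨l, x', y', hae, p, hp, hb⟩ := hstp
    by_cases hep : e ∈ p.edges
    · exact Or.inl ⟨k, a, Nat.lt_succ_self _, hSN, ⟨l, x', y', hae, p, hp, hep⟩⟩
    · -- transfer p into swapF F i j e at index l
      have hsub : ∀ f ∈ p.edges, f ∈ (fromEdgeSet (swapF F i j e l)).edgeSet := by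
        intro f hf
        have hf' := p.edges_subset_edgeSet hf
        rw [edgeSet_fromEdgeSet] at hf' ⊢
        refine ⟨?_, hf'.2⟩
        rcases eq_or_ne l i with rfl | hli
        · rw [swapF_i hij]; exact Set.mem_insert_iff.mpr (Or.inr hf'.1)
        rcases eq_or_ne l j with rfl | hlj
        · rw [swapF_j hij]
          exact ⟨hf'.1, fun hc => hep (hc ▸ hf)⟩
        · rw [swapF_other hli hlj]; exact hf'.1
      refine Or.inr ⟨a, hSN₂, l, x', y', hae, p.transfer _ hsub, hp.transfer _, ?_⟩
      rw [Walk.edges_transfer]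
      exact hb

lemma augment {m : ℕ} {E : Set (Sym2 W)} (hE : ∀ e ∈ E, ¬ e.IsDiag) :
    ∀ k (F : Fin m → Set (Sym2 W)), GoodFam m E F → ∀ e0 ∈ E, e0 ∉ uF F →
      ∀ e, StepN F e0 k e → Freee F e →
        ∃ F', GoodFam m E F' ∧ uF F' = insert e0 (uF F) := by
  intro k
  induction k using Nat.strong_induction_on with
  | _ k ih =>
    intro F hG e0 he0E he0u e hSN hfree
    obtain ⟨i, x, y, hexy, hnr⟩ := hfree
    match k, hSN with
    | 0, hSN =>
      -- e = e0, insert it into F i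
      have he : e = e0 := hSN
      subst he
      refine ⟨Function.update F i (insert e (F i)), ⟨?_, ?_, ?_⟩, ?_⟩
      · intro l f hf
        rcases eq_or_ne l i with rfl | hli
        · rw [Function.update_self] at hf
          rcases hf with rfl | hf
          · exact he0E
          · exact hG.sub l hf
        · rw [Function.update_of_ne hli] at hf
          exact hG.sub l hf
      · intro l
        rcases eq_or_ne l i with rfl | hli
        · rw [Function.update_self, hexy]
          exact acyclic_insert (hG.acyc l) hnr
        · rw [Function.update_of_ne hli]
          exact hG.acyc l
      · intro l l' hll' f hf hf'
        have hnot : ∀ l'', e ∉ F l'' := fun l'' hc => he0u (mem_uF.mpr ⟨l'', hc⟩)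
        rcases eq_or_ne l i with rfl | hli
        · rw [Function.update_self] at hf
          rw [Function.update_of_ne (by rintro rfl; exact hll' rfl)] at hf'
          rcases hf with rfl | hf
          · exact hnot l' hf'
          · exact hG.disj l l' hll' f hf hf'
        rw [Function.update_of_ne hli] at hf
        rcases eq_or_ne l' i with rfl | hli'
        · rw [Function.update_self] at hf'
          rcases hf' with rfl | hf'
          · exact hnot l hf
          · exact hG.disj l l' hll' f hf hf'
        · rw [Function.update_of_ne hli'] at hf'
          exact hG.disj l l' hll' f hf hf'
      · ext f
        simp only [mem_uF, Set.mem_insert_iff]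
        constructor
        · rintro ⟨l, hl⟩
          rcases eq_or_ne l i with rfl | hli
          · rw [Function.update_self] at hl
            rcases hl with rfl | hl
            · exact Or.inl rfl
            · exact Or.inr ⟨l, hl⟩
          · rw [Function.update_of_ne hli] at hl
            exact Or.inr ⟨l, hl⟩
        · rintro (rfl | hf)
          · exact ⟨i, by rw [Function.update_self]; exact Set.mem_insert _ _⟩
          · obtain ⟨l, hl⟩ := hf
            rcases eq_or_ne l i with rfl | hli
            · exact ⟨l, by rw [Function.update_self]; exact Set.mem_insert_iff.mpr (Or.inr hl)⟩
            · exact ⟨l, by rw [Function.update_of_ne hli]; exact hl⟩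
    | (k+1), hSN =>
      obtain ⟨e', hSN', hstp⟩ := hSN
      obtain ⟨j, x', y', he', p, hp, hbe⟩ := hstp
      -- e ∈ F j
      obtain ⟨hej, hed⟩ : e ∈ F j ∧ ¬ e.IsDiag := by
        have := p.edges_subset_edgeSet hbe
        rw [edgeSet_fromEdgeSet] at this
        exact ⟨this.1, this.2⟩
      have hij : i ≠ j := by
        rintro rfl
        refine hnr (Adj.reachable ?_)
        rw [fromEdgeSet_adj]
        refine ⟨hexy ▸ hej, ?_⟩
        rintro rfl
        exact hnr (Reachable.refl _)
      rcases step_transfer hij (e := e) (e0 := e0) k e' hSN' with ⟨s, a, hs, h1, h2⟩ | hSN₂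
      · exact ih (s+1) (Nat.succ_lt_succ hs) F hG e0 he0E he0u e ⟨a, h1, h2⟩ ⟨i, x, y, hexy, hnr⟩
      · obtain ⟨hG₂, hu₂⟩ := swap_good hG hij hej hexy hnr
        have hfree₂ : Freee (swapF F i j e) e' := by
          refine ⟨j, x', y', he', ?_⟩
          rw [swapF_j hij]
          exact not_reachable_sdiff (hG.acyc j) p hp hbe
        have he0u₂ : e0 ∉ uF (swapF F i j e) := hu₂ ▸ he0u
        obtain ⟨F', hF', huF'⟩ := ih k (Nat.lt_succ_self _) (swapF F i j e) hG₂ e0 he0E he0u₂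
          e' hSN₂ hfree₂
        exact ⟨F', hF', by rw [huF', hu₂]⟩

lemma ncard_iUnion_fin {m : ℕ} [Fintype W] (A : Fin m → Set (Sym2 W))
    (hdisj : ∀ i j, i ≠ j → ∀ e, e ∈ A i → e ∈ A j → False) :
    (⋃ i, A i).ncard = ∑ i, (A i).ncard := by
  classical
  have h1 : (⋃ i, A i).toFinset = Finset.univ.biUnion (fun i => (A i).toFinset) := by
    ext e; simp
  rw [Set.ncard_eq_toFinset_card', h1, Finset.card_biUnion]
  · exact Finset.sum_congr rfl (fun i _ => by rw [Set.ncard_eq_toFinset_card'])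
  · intro i _ j _ hij
    simp only [Finset.disjoint_left, Set.mem_toFinset]
    exact fun {e} he he' => (hdisj i j hij e he he').elim

lemma exists_max_fam (m : ℕ) [Fintype W] (E : Set (Sym2 W)) :
    ∃ F, GoodFam m E F ∧ ∀ F', GoodFam m E F' → (uF F').ncard ≤ (uF F).ncard := by
  classical
  set P : ℕ → Prop := fun n => ∃ F, GoodFam m E F ∧ (uF F).ncard = n with hP
  have hbound : ∀ F, GoodFam m E F → (uF F).ncard ≤ E.ncard := by
    intro F hF
    refine Set.ncard_le_ncard ?_ (Set.toFinite _)
    intro e he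
    obtain ⟨i, hi⟩ := mem_uF.mp he
    exact hF.sub i hi
  have h0 : P 0 := by
    refine ⟨fun _ => ∅, ⟨fun i => by simp, fun i => by
      rw [fromEdgeSet_empty]; exact isAcyclic_bot, fun i j _ e he => absurd he (by simp)⟩, ?_⟩
    simp [uF]
  have hspec : P (Nat.findGreatest P E.ncard) :=
    Nat.findGreatest_spec (Nat.zero_le _) h0
  obtain ⟨F, hF, hcard⟩ := hspec
  refine ⟨F, hF, fun F' hF' => ?_⟩
  rw [hcard]
  exact Nat.le_findGreatest (hbound F' hF') ⟨F', hF', rfl⟩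

lemma exists_good_cover {m : ℕ} [Fintype W] (hm : 0 < m) {E : Set (Sym2 W)}
    (hE : ∀ e ∈ E, ¬ e.IsDiag)
    (hsp : ∀ U : Set W, U.Nonempty → {e ∈ E | ∀ v ∈ e, v ∈ U}.ncard + m ≤ m * U.ncard) :
    ∃ F, GoodFam m E F ∧ uF F = E := by
  classical
  obtain ⟨F, hF, hmax⟩ := exists_max_fam m E
  refine ⟨F, hF, ?_⟩
  by_contra hne
  have hsub : uF F ⊆ E := fun e he => hF.sub (mem_uF.mp he).choose (mem_uF.mp he).choose_spec
  obtain ⟨e0, he0E, he0u⟩ : ∃ e0, e0 ∈ E ∧ e0 ∉ uF F := by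
    by_contra h
    push_neg at h
    exact hne (Set.Subset.antisymm hsub h)
  by_cases hchain : ∃ k e, StepN F e0 k e ∧ Freee F e
  · obtain ⟨k, e, hSN, hfr⟩ := hchain
    obtain ⟨F', hF', huF'⟩ := augment hE k F hF e0 he0E he0u e hSN hfr
    have h1 := hmax F' hF'
    rw [huF', Set.ncard_insert_of_notMem he0u (Set.toFinite _)] at h1
    omega
  · push_neg at hchain
    set R : Set (Sym2 W) := {e | ∃ k, StepN F e0 k e} with hR
    have he0R : e0 ∈ R := ⟨0, rfl⟩
    have hRclosed : ∀ e ∈ R, ∀ f, Stp F e f → f ∈ R := by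
      rintro e ⟨k, hk⟩ f hstp
      exact ⟨k+1, e, hk, hstp⟩
    have hRE : ∀ e ∈ R, e ∈ E := by
      rintro e ⟨k, hk⟩
      match k, hk with
      | 0, hk => exact hk ▸ he0E
      | (k+1), ⟨e', _, hstp⟩ =>
        obtain ⟨i, hi, _⟩ := stp_mem hstp
        exact hF.sub i hi
    have hreach : ∀ e ∈ R, ∀ x y, e = s(x,y) → ∀ i, (fromEdgeSet (F i)).Reachable x y := by
      intro e heR x y hexy i
      by_contra hnr
      obtain ⟨k, hk⟩ := heR
      exact hchain k e hk ⟨i, x, y, hexy, hnr⟩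
    -- reachability within F i ∩ R
    have hAreach : ∀ e ∈ R, ∀ x y, e = s(x,y) → ∀ i,
        (fromEdgeSet (F i ∩ R)).Reachable x y := by
      intro e heR x y hexy i
      obtain ⟨w⟩ := hreach e heR x y hexy i
      set q : (fromEdgeSet (F i)).Walk x y := w.toPath.1 with hq
      have hqp : q.IsPath := w.toPath.2
      have hedges : ∀ f ∈ q.edges, f ∈ (fromEdgeSet (F i ∩ R)).edgeSet := by
        intro f hf
        have hf' := q.edges_subset_edgeSet hf
        rw [edgeSet_fromEdgeSet] at hf' ⊢
        exact ⟨⟨hf'.1, hRclosed e heR f ⟨i, x, y, hexy, q, hqp, hf⟩⟩, hf'.2⟩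
      exact ⟨q.transfer _ hedges⟩
    set U : Set W := {v | ∃ e ∈ R, v ∈ e} with hU
    obtain ⟨x0, y0, he0xy⟩ := sym2_rep e0
    have hx0 : x0 ∈ U := ⟨e0, he0R, he0xy ▸ Sym2.mem_mk_left _ _⟩
    have hRd : ∀ e ∈ R, ¬ e.IsDiag := fun e he => hE e (hRE e he)
    have hRedges : ∀ e ∈ R, e ∈ (fromEdgeSet R).edgeSet := by
      intro e he
      rw [edgeSet_fromEdgeSet]
      exact ⟨he, hRd e he⟩
    -- every endpoint of an R-edge reaches x0 in fromEdgeSet R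
    have hRreach : ∀ k e, StepN F e0 k e → ∀ v, v ∈ e → (fromEdgeSet R).Reachable v x0 := by
      intro k
      induction k with
      | zero =>
        intro e hk v hv
        have he : e = e0 := hk
        rw [he, he0xy, Sym2.mem_iff] at hv
        have hadj : (fromEdgeSet R).Adj x0 y0 := by
          rw [fromEdgeSet_adj]
          refine ⟨he0xy ▸ he0R, fun h => hRd e0 he0R ?_⟩
          rw [he0xy, h]
          simp [Sym2.isDiag_iff_proj_eq]
        rcases hv with rfl | rfl
        · exact Reachable.refl _
        · exact hadj.symm.reachable
      | succ k ih =>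
        rintro e ⟨e', hSN', hstp⟩ v hv
        obtain ⟨j, x', y', he', p, hp, hbe⟩ := hstp
        have he'R : e' ∈ R := ⟨k, hSN'⟩
        have hpR : ∀ f ∈ p.edges, f ∈ (fromEdgeSet R).edgeSet := by
          intro f hf
          exact hRedges f (hRclosed e' he'R f ⟨j, x', y', he', p, hp, hf⟩)
        set pt := p.transfer (fromEdgeSet R) hpR with hpt
        obtain ⟨a, b, heab⟩ := sym2_rep e
        have haS : a ∈ pt.support := by
          rw [Walk.support_transfer]
          exact p.fst_mem_support_of_mem_edges (heab ▸ hbe)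
        have hbS : b ∈ pt.support := by
          rw [Walk.support_transfer]
          exact p.snd_mem_support_of_mem_edges (heab ▸ hbe)
        have hx'r : (fromEdgeSet R).Reachable x' x0 :=
          ih e' hSN' x' (he' ▸ Sym2.mem_mk_left _ _)
        have hvS : v ∈ pt.support := by
          rw [heab, Sym2.mem_iff] at hv
          rcases hv with rfl | rfl
          · exact haS
          · exact hbS
        have : (fromEdgeSet R).Reachable x' v := ⟨pt.takeUntil v hvS⟩
        exact this.symm.trans hx'r
    have hUreach : ∀ u ∈ U, ∀ v ∈ U, (fromEdgeSet R).Reachable u v := by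
      rintro u ⟨e, heR, hue⟩ v ⟨f, hfR, hvf⟩
      obtain ⟨k, hk⟩ := heR
      obtain ⟨k', hk'⟩ := hfR
      exact (hRreach k e hk u hue).trans (hRreach k' f hk' v hvf).symm
    -- conversion of R-walks to (F i ∩ R)-reachability
    have hconv : ∀ i, ∀ {a b : W} (_ : (fromEdgeSet R).Walk a b),
        (fromEdgeSet (F i ∩ R)).Reachable a b := by
      intro i a b w
      induction w with
      | nil => exact Reachable.refl _
      | @cons a c b h p ih =>
        rw [fromEdgeSet_adj] at h
        exact (hAreach s(a,c) h.1 a c rfl i).trans ih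
    have hUne : U.Nonempty := ⟨x0, hx0⟩
    have hcount : ∀ i, (F i ∩ R).ncard + 1 = U.ncard := by
      intro i
      refine connected_count hUne ?_ ?_ ?_ ?_
      · exact fun e he => hRd e he.2
      · exact fun e he v hv => ⟨e, he.2, hv⟩
      · exact acyclic_mono (fromEdgeSet_mono Set.inter_subset_left) (hF.acyc i)
      · intro x hxU y hyU
        obtain ⟨w⟩ := hUreach x hxU y hyU
        exact hconv i w
    -- final counting contradiction
    set EU : Set (Sym2 W) := {e ∈ E | ∀ v ∈ e, v ∈ U} with hEU
    have hBsub : insert e0 (⋃ i, F i ∩ R) ⊆ EU := by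
      rintro f (rfl | hf)
      · exact ⟨he0E, fun v hv => ⟨f, he0R, hv⟩⟩
      · obtain ⟨t, ⟨i, rfl⟩, hft⟩ := hf
        exact ⟨hRE f hft.2, fun v hv => ⟨f, hft.2, hv⟩⟩
    have he0notin : e0 ∉ ⋃ i, F i ∩ R := by
      rintro ⟨t, ⟨i, rfl⟩, hft⟩
      exact he0u (mem_uF.mpr ⟨i, hft.1⟩)
    have hcard1 : (insert e0 (⋃ i, F i ∩ R)).ncard = (⋃ i, F i ∩ R).ncard + 1 :=
      Set.ncard_insert_of_notMem he0notin (Set.toFinite _)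
    have hcard2 : (⋃ i, F i ∩ R).ncard = ∑ i : Fin m, (F i ∩ R).ncard :=
      ncard_iUnion_fin _ (fun i j hij e he he' => hF.disj i j hij e he.1 he'.1)
    have hsum : ∑ i : Fin m, (F i ∩ R).ncard = m * (U.ncard - 1) := by
      rw [Finset.sum_congr rfl (fun i _ => by have := hcount i; omega : 
        ∀ i ∈ Finset.univ, (F i ∩ R).ncard = U.ncard - 1)]
      simp [Finset.sum_const, mul_comm]
    have hle : (insert e0 (⋃ i, F i ∩ R)).ncard ≤ EU.ncard :=
      Set.ncard_le_ncard hBsub (Set.toFinite _)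
    have hspU := hsp U hUne
    have hU1 : 1 ≤ U.ncard := (Set.ncard_pos (Set.toFinite _)).mpr hUne
    obtain ⟨u', hu'⟩ : ∃ u', U.ncard = u' + 1 := ⟨U.ncard - 1, by omega⟩
    rw [hu'] at hspU hsum
    simp only [Nat.add_sub_cancel] at hsum
    have hmu : m * (u' + 1) = m * u' + m := by ring
    have hEUeq : {e ∈ E | ∀ v ∈ e, v ∈ U}.ncard = EU.ncard := rfl
    omega

lemma main_tight [Fintype W] [Nonempty W] {m : ℕ} (hm : 0 < m) {E : Set (Sym2 W)}
    (hE : ∀ e ∈ E, ¬ e.IsDiag)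
    (hsp : ∀ U : Set W, U.Nonempty → {e ∈ E | ∀ v ∈ e, v ∈ U}.ncard + m ≤ m * U.ncard)
    (hcard : E.ncard = m * (Fintype.card W - 1)) :
    ∃ T : Fin m → SimpleGraph W, (∀ i, (T i).edgeSet ⊆ E) ∧ (∀ i, (T i).IsTree) ∧
      (∀ i j, i ≠ j → Disjoint (T i).edgeSet (T j).edgeSet) := by
  classical
  obtain ⟨F, hF, hcover⟩ := exists_good_cover hm hE hsp
  set n := Fintype.card W with hn
  have hn1 : 1 ≤ n := Fintype.card_pos
  have hFd : ∀ i, ∀ e ∈ F i, ¬ e.IsDiag := fun i e he => hE e (hF.sub i he)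
  have hble : ∀ i, (F i).ncard + 1 ≤ n := fun i => acyclic_ncard_le (hFd i) (hF.acyc i)
  have hsum : ∑ i : Fin m, (F i).ncard = m * (n - 1) := by
    rw [← hcard, ← hcover, show uF F = ⋃ i, F i from rfl, ncard_iUnion_fin _ hF.disj]
  have heach : ∀ i, (F i).ncard = n - 1 := by
    intro i
    by_contra hne
    have hlt : ∑ j : Fin m, (F j).ncard < ∑ _j : Fin m, (n - 1) :=
      Finset.sum_lt_sum (fun j _ => by have := hble j; omega)
        ⟨i, Finset.mem_univ i, by have := hble i; omega⟩
    rw [Finset.sum_const, Finset.card_univ, Fintype.card_fin, smul_eq_mul, hsum] at hlt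
    omega
  have htree : ∀ i, (fromEdgeSet (F i)).IsTree := by
    intro i
    refine ⟨?_, hF.acyc i⟩
    rw [connected_iff]
    refine ⟨fun x y => ?_, inferInstance⟩
    by_contra hnr
    have hxy : x ≠ y := by rintro rfl; exact hnr (Reachable.refl _)
    have hins : (fromEdgeSet (insert s(x,y) (F i))).IsAcyclic := acyclic_insert (hF.acyc i) hnr
    have hinsd : ∀ e ∈ insert s(x,y) (F i), ¬ e.IsDiag := by
      rintro e (rfl | he)
      · simpa [Sym2.isDiag_iff_proj_eq] using hxy
      · exact hFd i e he
    have hble' := acyclic_ncard_le hinsd hins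
    have hnotmem : s(x,y) ∉ F i := by
      intro hmem
      exact hnr (Adj.reachable (by rw [fromEdgeSet_adj]; exact ⟨hmem, hxy⟩))
    rw [Set.ncard_insert_of_notMem hnotmem (Set.toFinite _)] at hble'
    have := heach i
    omega
  refine ⟨fun i => fromEdgeSet (F i), ?_, htree, ?_⟩
  · intro i
    rw [edgeSet_from (hFd i)]
    exact hF.sub i
  · intro i j hij
    rw [edgeSet_from (hFd i), edgeSet_from (hFd j)]
    rw [Set.disjoint_left]
    exact fun {e} he he' => hF.disj i j hij e he he'

end Aux

theorem stmt6 {V : Type*} [Fintype V] (m : ℕ) (hm : 0 < m) (G : SimpleGraph V)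
    (hV : 2 ≤ Fintype.card V)
    (hE : m * (Fintype.card V - 1) + 1 ≤ G.edgeSet.ncard) :
    ∃ H : G.Subgraph, 2 ≤ H.verts.ncard ∧ IsTreeConn m H.coe ∧
      ∀ e ∈ H.edgeSet, IsTreeConn m (H.deleteEdges {e}).coe := by
  classical
  have hnE : Nonempty V := by
    have : 0 < Fintype.card V := by omega
    exact Fintype.card_pos_iff.mp this
  set Viol : Set V → Prop := fun S => S.Nonempty ∧ m * S.ncard + 1 ≤ eIn G S + m with hViol
  have hunivV : Viol Set.univ := by
    refine ⟨Set.univ_nonempty, ?_⟩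
    have h1 : eIn G Set.univ = G.edgeSet.ncard := by
      unfold eIn; congr 1; ext e; simp
    rw [h1, Set.ncard_univ, Nat.card_eq_fintype_card]
    obtain ⟨n', hn'⟩ : ∃ n', Fintype.card V = n' + 1 := ⟨Fintype.card V - 1, by omega⟩
    rw [hn'] at hE ⊢
    simp only [Nat.add_sub_cancel] at hE
    have : m * (n' + 1) = m * n' + m := by ring
    omega
  have hex : ∃ k, ∃ S, Viol S ∧ S.ncard = k := ⟨_, Set.univ, hunivV, rfl⟩
  obtain ⟨S, hSviol, hSk⟩ := Nat.find_spec hex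
  have hminK : ∀ S', Viol S' → Nat.find hex ≤ S'.ncard :=
    fun S' h => Nat.find_min' hex ⟨S', h, rfl⟩
  have hS2 : 2 ≤ S.ncard := by
    by_contra h
    have hpos : 0 < S.ncard := (Set.ncard_pos (Set.toFinite S)).mpr hSviol.1
    have h1 : S.ncard = 1 := by omega
    obtain ⟨v, hv⟩ := Set.ncard_eq_one.mp h1
    have h2 := hSviol.2
    rw [h1] at h2
    have h3 : 1 ≤ eIn G S := by omega
    obtain ⟨e, he⟩ : ({e ∈ G.edgeSet | ∀ v ∈ e, v ∈ S} : Set (Sym2 V)).Nonempty :=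
      Set.nonempty_of_ncard_ne_zero (by show eIn G S ≠ 0; omega)
    obtain ⟨x, y, rfl⟩ := sym2_rep e
    have hx : x ∈ S := he.2 x (Sym2.mem_mk_left _ _)
    have hy : y ∈ S := he.2 y (Sym2.mem_mk_right _ _)
    rw [hv] at hx hy
    have : G.Adj x y := he.1
    rw [hx, hy] at this
    exact G.loopless.irrefl v this
  have hminS : ∀ S' : Set V, S'.Nonempty → S'.ncard < S.ncard → eIn G S' + m ≤ m * S'.ncard := by
    intro S' hne hlt
    by_contra h
    have : Viol S' := ⟨hne, by omega⟩
    have := hminK S' this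
    omega
  -- select the tight edge set E₀
  have hE0le : m * (S.ncard - 1) + 1 ≤ eIn G S := by
    have h2 := hSviol.2
    obtain ⟨k', hk'⟩ : ∃ k', S.ncard = k' + 1 := ⟨S.ncard - 1, by omega⟩
    rw [hk'] at h2 ⊢
    simp only [Nat.add_sub_cancel]
    have : m * (k' + 1) = m * k' + m := by ring
    omega
  obtain ⟨E₀, hE₀sub, hE₀card⟩ := Set.exists_subset_card_eq
    (show m * (S.ncard - 1) + 1 ≤ ({e ∈ G.edgeSet | ∀ v ∈ e, v ∈ S} : Set (Sym2 V)).ncard from hE0le)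
  have hE₀G : E₀ ⊆ G.edgeSet := fun e he => (hE₀sub he).1
  have hE₀S : ∀ e ∈ E₀, ∀ v ∈ e, v ∈ S := fun e he => (hE₀sub he).2
  have hE₀d : ∀ e ∈ E₀, ¬ e.IsDiag := fun e he => G.not_isDiag_of_mem_edgeSet (hE₀G he)
  haveI : Fintype ↥S := (Set.toFinite S).fintype
  haveI : Nonempty ↥S := Set.Nonempty.to_subtype hSviol.1
  have hScard : Fintype.card ↥S = S.ncard := by
    rw [Set.ncard_eq_toFinset_card', Set.toFinset_card]
  have core : ∀ E₁ : Set (Sym2 V), E₁ ⊆ E₀ → E₁.ncard = m * (S.ncard - 1) →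
      ∃ T : Fin m → SimpleGraph ↥S, (∀ i, (T i).edgeSet ⊆ pullE S E₁) ∧
        (∀ i, (T i).IsTree) ∧ ∀ i j, i ≠ j → Disjoint (T i).edgeSet (T j).edgeSet := by
    intro E₁ hsub hcard
    have hE₁S : ∀ e ∈ E₁, ∀ v ∈ e, v ∈ S := fun e he => hE₀S e (hsub he)
    have hE₁d : ∀ e ∈ E₁, ¬ e.IsDiag := fun e he => hE₀d e (hsub he)
    have hsp : ∀ U : Set ↥S, U.Nonempty →
        {e ∈ pullE S E₁ | ∀ v ∈ e, v ∈ U}.ncard + m ≤ m * U.ncard := by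
      intro T' hT'
      by_cases hTu : T' = Set.univ
      · subst hTu
        have h1 : {e ∈ pullE S E₁ | ∀ v ∈ e, v ∈ (Set.univ : Set ↥S)} = pullE S E₁ := by
          ext e; simp
        rw [h1, ncard_pullE hE₁S, hcard, Set.ncard_univ, Nat.card_eq_fintype_card, hScard]
        obtain ⟨k', hk'⟩ : ∃ k', S.ncard = k' + 1 := ⟨S.ncard - 1, by omega⟩
        rw [hk']
        simp only [Nat.add_sub_cancel]
        have : m * (k' + 1) = m * k' + m := by ring
        omega
      · set S' : Set V := Subtype.val '' T' with hS'
        have hS'ne : S'.Nonempty := hT'.image _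
        have hS'lt : S'.ncard < S.ncard := by
          refine Set.ncard_lt_ncard ?_ (Set.toFinite S)
          constructor
          · rintro v ⟨a, _, rfl⟩; exact a.2
          · intro hcon
            obtain ⟨a, ha⟩ := (Set.ne_univ_iff_exists_notMem T').mp hTu
            obtain ⟨b, hb, hba⟩ := hcon a.2
            have : b = a := Subtype.ext hba
            exact ha (this ▸ hb)
        have himg : Sym2.map (Subtype.val : ↥S → V) '' {e ∈ pullE S E₁ | ∀ v ∈ e, v ∈ T'} ⊆
            {e ∈ G.edgeSet | ∀ v ∈ e, v ∈ S'} := by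
          rintro f ⟨e', ⟨he'm, he'T⟩, rfl⟩
          refine ⟨hE₀G (hsub he'm), ?_⟩
          intro v hv
          rw [Sym2.mem_map] at hv
          obtain ⟨w, hw, rfl⟩ := hv
          exact ⟨w, he'T w hw, rfl⟩
        have hinj := Set.ncard_image_of_injective {e ∈ pullE S E₁ | ∀ v ∈ e, v ∈ T'}
          (Sym2.map.injective (Subtype.val_injective : Function.Injective (Subtype.val : ↥S → V)))
        have hle2 : (Sym2.map (Subtype.val : ↥S → V) ''
            {e ∈ pullE S E₁ | ∀ v ∈ e, v ∈ T'}).ncard ≤ eIn G S' :=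
          Set.ncard_le_ncard himg (Set.toFinite _)
        have h3 := hminS S' hS'ne hS'lt
        have h4 : T'.ncard = S'.ncard :=
          (Set.ncard_image_of_injective _ Subtype.val_injective).symm
        have h5 : m * T'.ncard = m * S'.ncard := by rw [h4]
        have h6 : {e ∈ pullE S E₁ | ∀ v ∈ e, v ∈ T'}.ncard ≤ eIn G S' := by
          rw [← hinj]; exact hle2
        omega
    have hcards : (pullE S E₁).ncard = m * (Fintype.card ↥S - 1) := by
      rw [ncard_pullE hE₁S, hcard, hScard]
    exact main_tight (W := ↥S) hm (pullE_nondiag hE₁d) hsp hcards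
  refine ⟨⟨S, fun u v => s(u,v) ∈ E₀, ?_, ?_, ?_⟩, ?_, ?_, ?_⟩
  · intro u v h
    exact (G.mem_edgeSet).mp (hE₀G h)
  · intro u v h
    exact hE₀S _ h u (Sym2.mem_mk_left _ _)
  · refine ⟨fun u v h => ?_⟩
    rwa [Sym2.eq_swap]
  · exact hS2
  · -- the whole subgraph is m-tree-connected
    unfold IsTreeConn
    obtain ⟨estar, hestar⟩ : E₀.Nonempty := Set.nonempty_of_ncard_ne_zero (by omega)
    have hcard1 : (E₀ \ {estar}).ncard = m * (S.ncard - 1) := by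
      rw [Set.ncard_diff_singleton_of_mem hestar, hE₀card]
      omega
    obtain ⟨T, hT1, hT2, hT3⟩ := core (E₀ \ {estar}) Set.diff_subset hcard1
    refine ⟨T, ?_, hT2, hT3⟩
    intro i a b hab
    have h1 := hT1 i ((SimpleGraph.mem_edgeSet _).mpr hab)
    rw [mem_pullE] at h1
    exact h1.1
  · intro e he
    unfold IsTreeConn
    have heE₀ : e ∈ E₀ := by
      obtain ⟨x, y, hxy⟩ := sym2_rep e
      rw [hxy] at he ⊢
      exact SimpleGraph.Subgraph.mem_edgeSet.mp he
    have hcard1 : (E₀ \ {e}).ncard = m * (S.ncard - 1) := by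
      rw [Set.ncard_diff_singleton_of_mem heE₀, hE₀card]
      omega
    obtain ⟨T, hT1, hT2, hT3⟩ := core (E₀ \ {e}) Set.diff_subset hcard1
    refine ⟨T, ?_, hT2, hT3⟩
    intro i a b hab
    have h1 := hT1 i ((SimpleGraph.mem_edgeSet _).mpr hab)
    replace h1 := (mem_pullE (U := S)).mp h1
    exact ⟨h1.1, h1.2⟩
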